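/- For every f ∈ K(C), there exists w such that (f, w) is a point of the polytope Q. (That is, the projection of Q onto the f-coordinates contains the codeword polytope K(C).) -/
import Mathlib


open Finset

/-- The tuple of sets `X_j(c)`: for each symbol `α`, the set of positions `i` in the
support of the `j`-th row of `H` where `c i = α`. -/
def Xj {R : Type} [Ring R] [DecidableEq R] {n m : ℕ} (H : Fin m → Fin n → R) (j : Fin m)
    (c : Fin n → R) : R → Finset (Fin n) :=
  fun α => univ.filter (fun i => H j i ≠ 0 ∧ c i = α)

/-- The set `E_j` of all tuples `X_j(c)` arising from words `c` satisfying parity check `j`. -/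
def Ej {R : Type} [Ring R] [Fintype R] [DecidableEq R] {n m : ℕ} (H : Fin m → Fin n → R)
    (j : Fin m) : Finset (R → Finset (Fin n)) :=
  (univ.filter (fun c : Fin n → R => ∑ i, H j i * c i = 0)).image (Xj H j)

/-- Membership in the relaxed LP polytope `Q`. -/
def MemQ {R : Type} [Ring R] [Fintype R] [DecidableEq R] {n m : ℕ} (H : Fin m → Fin n → R)
    (f : Fin n → R → ℝ) (w : Fin m → (R → Finset (Fin n)) → ℝ) : Prop :=
  (∀ j : Fin m, ∀ S ∈ Ej H j, 0 ≤ w j S ∧ w j S ≤ 1) ∧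
  (∀ j : Fin m, ∑ S ∈ Ej H j, w j S = 1) ∧
  (∀ j : Fin m, ∀ i : Fin n, H j i ≠ 0 → ∀ α : R, α ≠ 0 →
    f i α = ∑ S ∈ (Ej H j).filter (fun S => i ∈ S α), w j S)

/-- LP pseudocodeword: nonnegative integer vectors `(h, z)` satisfying the defining equations. -/
def IsLPPseudocodeword {R : Type} [Ring R] [Fintype R] [DecidableEq R] {n m : ℕ}
    (H : Fin m → Fin n → R) (h : Fin n → R → ℤ)
    (z : Fin m → (R → Finset (Fin n)) → ℤ) : Prop :=
  (∀ i α, 0 ≤ h i α) ∧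
  (∀ j : Fin m, ∀ S ∈ Ej H j, 0 ≤ z j S) ∧
  (∀ j : Fin m, ∀ i : Fin n, H j i ≠ 0 →
    (∀ α : R, α ≠ 0 → h i α = ∑ S ∈ (Ej H j).filter (fun S => i ∈ S α), z j S) ∧
    h i 0 = ∑ S ∈ (Ej H j).filter (fun S => ∀ α : R, α ≠ 0 → i ∉ S α), z j S)

/-- The embedding of a word `c ∈ Rⁿ` as the point `(ξ(c₁) | … | ξ(c_n))`
(indicator coordinates for the nonzero symbols). -/
def xiEmb {R : Type} [Zero R] [DecidableEq R] {n : ℕ} (c : Fin n → R) : Fin n → R → ℝ :=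
  fun i α => if α ≠ 0 ∧ c i = α then 1 else 0

/-- The linear cost function `λ · fᵀ = ∑_i ∑_{α ∈ R⁻} λ_i^{(α)} f_i^{(α)}`. -/
def costQ {R : Type} [Zero R] [Fintype R] [DecidableEq R] {n : ℕ}
    (lam f : Fin n → R → ℝ) : ℝ :=
  ∑ i, ∑ α ∈ univ.filter (fun α : R => α ≠ 0), lam i α * f i α

/-- Connectedness of the Tanner graph of `H`: the bipartite graph on
`{u_1,…,u_n} ∪ {v_1,…,v_m}` with `u_i ~ v_j` iff `H j i ≠ 0`. -/
def TannerConnected {R : Type} [Zero R] {n m : ℕ} (H : Fin m → Fin n → R) : Prop :=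
  (SimpleGraph.fromRel (fun x y : Fin n ⊕ Fin m =>
      ∃ i j, x = Sum.inl i ∧ y = Sum.inr j ∧ H j i ≠ 0)).Connected

/-- Graph-cover pseudocodeword for the `M`-cover specified by permutations `σ`. -/
def IsGCPseudocodeword {R : Type} [Ring R] [DecidableEq R] {n m : ℕ}
    (H : Fin m → Fin n → R) (M : ℕ) (σ : Fin m → Fin n → Equiv.Perm (Fin M))
    (p : Fin n → Fin M → R) : Prop :=
  ∀ (j : Fin m) (ℓ : Fin M),
    ∑ i ∈ univ.filter (fun i => H j i ≠ 0), H j i * p i (σ j i ℓ) = 0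
/-- Every point `f` of the codeword polytope `K(C)` extends to a point
`(f, w)` of the polytope `Q`. -/
theorem stmt2 {R : Type} [Ring R] [Fintype R] [DecidableEq R] {n m : ℕ}
    (H : Fin m → Fin n → R) (f : Fin n → R → ℝ)
    (hf : f ∈ convexHull ℝ {g : Fin n → R → ℝ |
        ∃ c : Fin n → R, (∀ j : Fin m, ∑ i, H j i * c i = 0) ∧ g = xiEmb c}) :
    ∃ w : Fin m → (R → Finset (Fin n)) → ℝ, MemQ H f w := by
  classical
  rw [_root_.convexHull_eq] at hf
  obtain ⟨ι, t, wt, z, hw0, hw1, hz, hcm⟩ := hf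
  choose! c hc1 hc2 using hz
  rw [Finset.centerMass_eq_of_sum_1 _ _ hw1] at hcm
  have hmaps : ∀ j : Fin m, ∀ k ∈ t, Xj H j (c k) ∈ Ej H j := by
    intro j k hk
    exact Finset.mem_image_of_mem _ (Finset.mem_filter.mpr ⟨Finset.mem_univ _, hc1 k hk j⟩)
  refine ⟨fun j S => ∑ k ∈ t.filter (fun k => Xj H j (c k) = S), wt k, ?_, ?_, ?_⟩
  · intro j S _
    constructor
    · exact Finset.sum_nonneg fun k hk => hw0 k (Finset.mem_of_mem_filter k hk)
    · calc ∑ k ∈ t.filter (fun k => Xj H j (c k) = S), wt k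
          ≤ ∑ k ∈ t, wt k :=
            Finset.sum_le_sum_of_subset_of_nonneg (Finset.filter_subset _ _)
              (fun k hk _ => hw0 k hk)
        _ = 1 := hw1
  · intro j
    rw [Finset.sum_fiberwise_of_maps_to (hmaps j) wt]
    exact hw1
  · intro j i hHji α hα
    have hL : f i α = ∑ k ∈ t.filter (fun k => i ∈ Xj H j (c k) α), wt k := by
      have : f i α = ∑ k ∈ t, wt k * z k i α := by
        rw [← hcm]
        simp [Finset.sum_apply]
      rw [this, Finset.sum_filter]
      refine Finset.sum_congr rfl fun k hk => ?_
      rw [hc2 k hk]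
      by_cases h : c k i = α
      · simp [Xj, xiEmb, h, hα, hHji]
      · simp [Xj, xiEmb, h, hα]
    rw [hL]
    rw [← Finset.sum_fiberwise_of_maps_to
      (t := (Ej H j).filter (fun S => i ∈ S α))
      (g := fun k => Xj H j (c k))
      (fun k hk => by
        rw [Finset.mem_filter] at hk ⊢
        exact ⟨hmaps j k hk.1, hk.2⟩) wt]
    refine Finset.sum_congr rfl fun S hS => ?_
    rw [Finset.mem_filter] at hS
    congr 1
    rw [Finset.filter_filter]
    refine Finset.filter_congr fun k hk => ?_
    constructor
    · exact fun h => h.2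
    · rintro rfl; exact ⟨hS.2, rfl⟩
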